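/- Let ℓ be a separably closed field of characteristic p > 0, let q be a power of p, and let τ: ℓ → ℓ denote the q-power Frobenius map. For any invertible n × n matrix A over ℓ, there exists an invertible n × n matrix U over ℓ such that U⁻¹ · A · U^τ equals the identity matrix, where U^τ denotes entrywise application of τ. -/

import Mathlib

open Matrix Polynomial Finset Set

namespace LangGLAux


variable {ℓ : Type*} [Field ℓ]

lemma sum_smul_eq_vecMul {r n : ℕ} (v : Fin r → Fin n → ℓ) (c : Fin r → ℓ) :
    ∑ i, c i • v i = c ᵥ* (Matrix.of v) := by
  funext j
  simp [Matrix.vecMul, dotProduct, Finset.sum_apply, Matrix.of_apply]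

lemma linearIndependent_iff_exists_rightInv {r n : ℕ} (v : Fin r → Fin n → ℓ) :
    LinearIndependent ℓ v ↔ ∃ N : Matrix (Fin n) (Fin r) ℓ, Matrix.of v * N = 1 := by
  constructor
  · intro hv
    have hker : LinearMap.ker (Matrix.vecMulLinear (Matrix.of v)) = ⊥ := by
      rw [LinearMap.ker_eq_bot']
      intro c hc
      have hc' : ∑ i, c i • v i = 0 := by
        rw [sum_smul_eq_vecMul]
        simpa using hc
      exact funext (Fintype.linearIndependent_iff.mp hv c hc')
    obtain ⟨g, hg⟩ := (Matrix.vecMulLinear (Matrix.of v)).exists_leftInverse_of_injective hker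
    refine ⟨Matrix.of (fun i j => g (Pi.single i 1) j), ?_⟩
    have hrow : ∀ i : Fin r, g (v i) = Pi.single i 1 := by
      intro i
      have h1 : Matrix.vecMulLinear (Matrix.of v) (Pi.single i 1) = v i := by
        rw [Matrix.vecMulLinear_apply, ← sum_smul_eq_vecMul]
        simp [Pi.single_apply, ite_smul]
      have := congrArg (fun φ => φ (Pi.single i (1:ℓ))) hg
      simpa [h1] using this
    ext i j
    rw [Matrix.mul_apply, Matrix.one_apply]
    have : ∑ k, (Matrix.of v) i k * (Matrix.of (fun i j => g (Pi.single i 1) j)) k j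
        = g (∑ k, v i k • (Pi.single k 1 : Fin n → ℓ)) j := by
      rw [map_sum]
      simp [Matrix.of_apply, Finset.sum_apply]
    rw [this]
    have hvi : ∑ k, v i k • (Pi.single k 1 : Fin n → ℓ) = v i := by
      funext l
      simp [Pi.single_apply, Finset.sum_apply]
    rw [hvi, hrow i, Pi.single_apply]
    simp [eq_comm]
  · rintro ⟨N, hN⟩
    rw [Fintype.linearIndependent_iff]
    intro c hc
    have h0 : c ᵥ* (Matrix.of v) = 0 := by rw [← sum_smul_eq_vecMul, hc]
    intro i
    have : c ᵥ* ((Matrix.of v) * N) = (0 : Fin r → ℓ) := by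
      rw [← Matrix.vecMul_vecMul, h0, Matrix.zero_vecMul]
    rw [hN, Matrix.vecMul_one] at this
    exact congrFun this i

lemma indep_map_ringHom {r n : ℕ} {v : Fin r → Fin n → ℓ} (σ : ℓ →+* ℓ)
    (hv : LinearIndependent ℓ v) : LinearIndependent ℓ (fun i j => σ (v i j)) := by
  rw [linearIndependent_iff_exists_rightInv] at hv ⊢
  obtain ⟨N, hN⟩ := hv
  refine ⟨N.map σ, ?_⟩
  have h1 : (Matrix.of fun i j => σ (v i j)) = (Matrix.of v).map σ := rfl
  rw [h1, ← Matrix.map_mul, hN]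
  exact Matrix.map_one σ (map_zero σ) (map_one σ)



variable {ℓ : Type*} [Field ℓ]

lemma artin_schreier [IsSepClosed ℓ] {q : ℕ} (hq2 : 2 ≤ q) (hq0 : (q : ℓ) = 0) (z : ℓ) :
    ∃ x : ℓ, x - x ^ q = z := by
  have hderiv : derivative (X ^ q - X + C z : ℓ[X]) = -1 := by
    rw [derivative_add, derivative_sub, derivative_X_pow, derivative_X, derivative_C, hq0]
    simp
  have hsep : (X ^ q - X + C z : ℓ[X]).Separable := by
    rw [Polynomial.separable_def, hderiv]
    exact ⟨0, -1, by ring⟩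
  have hdeg : (X ^ q - X + C z : ℓ[X]).degree = q := by
    have h1 : (X ^ q - X + C z : ℓ[X]) = X ^ q + (-X + C z) := by ring
    rw [h1]
    rw [degree_add_eq_left_of_degree_lt, degree_X_pow]
    rw [degree_X_pow]
    refine lt_of_le_of_lt (degree_add_le _ _) ?_
    rw [max_lt_iff]
    constructor
    · rw [degree_neg, degree_X]
      exact_mod_cast by omega
    · exact lt_of_le_of_lt degree_C_le (by exact_mod_cast by omega)
  obtain ⟨x, hx⟩ := IsSepClosed.exists_root (X ^ q - X + C z) (by rw [hdeg]; exact_mod_cast by omega) hsep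
  refine ⟨x, ?_⟩
  have := hx
  simp only [IsRoot, eval_add, eval_sub, eval_pow, eval_X, eval_C] at this
  linear_combination -this

lemma exists_t [IsSepClosed ℓ] {q : ℕ} (hq2 : 2 ≤ q) (hq0 : (q : ℓ) = 0) (k : ℕ) (b : ℕ → ℓ)
    (hb : ∃ j, j ≤ k ∧ b j ≠ 0) :
    ∃ t : ℓ, t ≠ 0 ∧ t = ∑ j ∈ Finset.range (k + 1), b j * t ^ q ^ (j + 1) := by
  have hqpos : ∀ j : ℕ, 1 ≤ q ^ (j + 1) := fun j => Nat.one_le_pow _ _ (by omega)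
  set S : ℓ[X] := (∑ j ∈ Finset.range (k + 1), C (b j) * X ^ (q ^ (j + 1) - 1)) - 1 with hS
  have hQS : (∑ j ∈ Finset.range (k + 1), C (b j) * X ^ (q ^ (j + 1))) - X = S * X := by
    rw [hS, sub_mul, Finset.sum_mul, one_mul]
    congr 1
    refine Finset.sum_congr rfl fun j _ => ?_
    rw [mul_assoc, ← pow_succ]
    congr 2
    have h1 := hqpos j
    omega
  have hQder : derivative ((∑ j ∈ Finset.range (k + 1), C (b j) * X ^ (q ^ (j + 1))) - X : ℓ[X]) = -1 := by
    rw [derivative_sub, derivative_sum, derivative_X]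
    have : ∀ j ∈ Finset.range (k + 1), derivative (C (b j) * X ^ (q ^ (j + 1)) : ℓ[X]) = 0 := by
      intro j _
      rw [derivative_C_mul_X_pow]
      have : ((q ^ (j + 1) : ℕ) : ℓ) = 0 := by
        rw [Nat.cast_pow, hq0, zero_pow (by omega)]
      rw [Nat.cast_pow] at this ⊢
      rw [this, mul_zero, map_zero, zero_mul]
    rw [Finset.sum_congr rfl this]
    simp
  have hsepQ : ((∑ j ∈ Finset.range (k + 1), C (b j) * X ^ (q ^ (j + 1))) - X : ℓ[X]).Separable := by
    rw [Polynomial.separable_def, hQder]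
    exact ⟨0, -1, by ring⟩
  have hsepS : S.Separable := by
    rw [hQS] at hsepQ
    exact hsepQ.of_mul_left
  obtain ⟨j0, hj0k, hj0⟩ := hb
  have hcoeff : S.coeff (q ^ (j0 + 1) - 1) = b j0 := by
    rw [hS, coeff_sub, finset_sum_coeff]
    have h1 : (1 : ℓ[X]).coeff (q ^ (j0 + 1) - 1) = 0 := by
      rw [coeff_one]
      rw [if_neg]
      have := hq2
      have h2 : 2 ≤ q ^ (j0 + 1) := le_trans hq2 (Nat.le_self_pow (by omega) q)
      omega
    rw [h1, sub_zero]
    rw [Finset.sum_eq_single j0]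
    · rw [coeff_C_mul, coeff_X_pow, if_pos rfl, mul_one]
    · intro j _ hjne
      rw [coeff_C_mul, coeff_X_pow, if_neg, mul_zero]
      intro hcontra
      have h2 : q ^ (j0 + 1) = q ^ (j + 1) := by
        have := hqpos j; have := hqpos j0; omega
      exact hjne (by
        have := Nat.pow_right_injective hq2 h2.symm
        omega)
    · intro hmem
      exact absurd (Finset.mem_range.mpr (by omega)) hmem
  have hdegS : S.degree ≠ 0 := by
    have h2 : 2 ≤ q ^ (j0 + 1) := le_trans hq2 (Nat.le_self_pow (by omega) q)
    have hle : ((q ^ (j0 + 1) - 1 : ℕ) : WithBot ℕ) ≤ S.degree := le_degree_of_ne_zero (by rw [hcoeff]; exact hj0)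
    intro hdeg0
    rw [hdeg0] at hle
    have h3 : (q ^ (j0 + 1) - 1 : ℕ) ≤ 0 := by exact_mod_cast hle
    omega
  obtain ⟨t, ht⟩ := IsSepClosed.exists_root S hdegS hsepS
  have hevalS : ∀ u : ℓ, S.eval u = (∑ j ∈ Finset.range (k + 1), b j * u ^ (q ^ (j + 1) - 1)) - 1 := by
    intro u
    rw [hS, eval_sub, eval_finset_sum, eval_one]
    congr 1
    refine Finset.sum_congr rfl fun j _ => ?_
    rw [eval_mul, eval_C, eval_pow, eval_X]
  have ht0 : t ≠ 0 := by
    intro h0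
    rw [IsRoot, hevalS] at ht
    rw [h0] at ht
    have : ∀ j ∈ Finset.range (k + 1), b j * (0:ℓ) ^ (q ^ (j + 1) - 1) = 0 := by
      intro j _
      rw [zero_pow (by have := hqpos j; have h2 : 2 ≤ q ^ (j + 1) := le_trans hq2 (Nat.le_self_pow (by omega) q); omega), mul_zero]
    rw [Finset.sum_congr rfl this] at ht
    simp at ht
  refine ⟨t, ht0, ?_⟩
  rw [IsRoot, hevalS] at ht
  have hsum : ∑ j ∈ Finset.range (k + 1), b j * t ^ (q ^ (j + 1) - 1) = 1 := by
    exact sub_eq_zero.mp ht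
  calc t = (∑ j ∈ Finset.range (k + 1), b j * t ^ (q ^ (j + 1) - 1)) * t := by rw [hsum, one_mul]
    _ = ∑ j ∈ Finset.range (k + 1), b j * t ^ q ^ (j + 1) := by
        rw [Finset.sum_mul]
        refine Finset.sum_congr rfl fun j _ => ?_
        rw [mul_assoc, ← pow_succ]
        congr 2
        have h2 : 2 ≤ q ^ (j + 1) := le_trans hq2 (Nat.le_self_pow (by omega) q)
        omega



variable {ℓ : Type*} [Field ℓ] {n : ℕ}

def Fr (q : ℕ) (A : Matrix (Fin n) (Fin n) ℓ) (v : Fin n → ℓ) : Fin n → ℓ :=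
  A.mulVec fun i => v i ^ q

variable {q : ℕ} {A : Matrix (Fin n) (Fin n) ℓ}

lemma Fr_add (hqsum : ∀ x y : ℓ, (x + y) ^ q = x ^ q + y ^ q) (v w : Fin n → ℓ) :
    Fr q A (v + w) = Fr q A v + Fr q A w := by
  have h : (fun i => (v + w) i ^ q) = (fun i => v i ^ q) + fun i => w i ^ q := by
    funext i
    exact hqsum (v i) (w i)
  unfold Fr
  rw [h, Matrix.mulVec_add]

lemma Fr_smul (c : ℓ) (v : Fin n → ℓ) : Fr q A (c • v) = c ^ q • Fr q A v := by
  have h : (fun i => (c • v) i ^ q) = c ^ q • fun i => v i ^ q := by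
    funext i
    simp [mul_pow]
  unfold Fr
  rw [h, Matrix.mulVec_smul]

lemma Fr_sum (hqsum : ∀ x y : ℓ, (x + y) ^ q = x ^ q + y ^ q) {ι : Type*} (s : Finset ι)
    (g : ι → Fin n → ℓ) : Fr q A (∑ j ∈ s, g j) = ∑ j ∈ s, Fr q A (g j) := by
  have h0 : Fr q A (0 : Fin n → ℓ) = 0 := by
    have hq : q ≠ 0 := by
      intro h
      subst h
      have h1 := hqsum 0 0
      norm_num at h1
      exact zero_ne_one (by linear_combination h1)
    unfold Fr
    have h2 : (fun i => (0 : Fin n → ℓ) i ^ q) = (0 : Fin n → ℓ) := by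
      funext i
      exact zero_pow hq
    rw [h2, Matrix.mulVec_zero]
  exact map_sum (AddMonoidHom.mk' (Fr q A) (fun v w => Fr_add hqsum v w)) g s

lemma Fr_indep (hA : IsUnit A) (hσ : ∃ σ : ℓ →+* ℓ, ∀ x, σ x = x ^ q)
    {r : ℕ} {v : Fin r → Fin n → ℓ} (hv : LinearIndependent ℓ v) :
    LinearIndependent ℓ (fun i => Fr q A (v i)) := by
  obtain ⟨σ, hσeq⟩ := hσ
  have h1 : LinearIndependent ℓ (fun i j => (v i j) ^ q) := by
    have := indep_map_ringHom σ hv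
    simpa [hσeq] using this
  have hdet : IsUnit A.det := (Matrix.isUnit_iff_isUnit_det A).mp hA
  have hker : LinearMap.ker (Matrix.mulVecLin A) = ⊥ := by
    rw [LinearMap.ker_eq_bot']
    intro x hx
    rw [Matrix.mulVecLin_apply] at hx
    have : A⁻¹ *ᵥ (A *ᵥ x) = A⁻¹ *ᵥ 0 := by rw [hx]
    rwa [Matrix.mulVec_mulVec, Matrix.nonsing_inv_mul A hdet, Matrix.one_mulVec,
      Matrix.mulVec_zero] at this
  have := h1.map' (Matrix.mulVecLin A) hker
  exact this

lemma Fr_notin_span (hA : IsUnit A) (hσ : ∃ σ : ℓ →+* ℓ, ∀ x, σ x = x ^ q)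
    {x : Fin n → ℓ}
    (hx : x ∉ Submodule.span ℓ {v : Fin n → ℓ | Fr q A v = v}) :
    Fr q A x ∉ Submodule.span ℓ {v : Fin n → ℓ | Fr q A v = v} := by
  set Fix : Set (Fin n → ℓ) := {v : Fin n → ℓ | Fr q A v = v} with hFix
  obtain ⟨b, hbFix, hbspan, hbind⟩ := exists_linearIndependent ℓ Fix
  have hbfin : b.Finite := hbind.setFinite
  have : Fintype b := hbfin.fintype
  set r : ℕ := Fintype.card b with hr
  let e : b ≃ Fin r := Fintype.equivFin b
  set B : Fin r → (Fin n → ℓ) := fun i => ((e.symm i : b) : Fin n → ℓ) with hB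
  have hrange : Set.range B = b := by
    rw [hB]
    have : Set.range (fun i => ((e.symm i : b) : Fin n → ℓ)) = Subtype.val '' Set.range e.symm := by
      rw [← Set.range_comp]; rfl
    rw [this, Equiv.range_eq_univ, Set.image_univ, Subtype.range_coe]
  have hBind : LinearIndependent ℓ B := hbind.comp e.symm e.symm.injective
  have hspanB : Submodule.span ℓ (Set.range B) = Submodule.span ℓ Fix := by
    rw [hrange, hbspan]
  have hBFix : ∀ i, Fr q A (B i) = B i := by
    intro i
    exact hbFix (Subtype.coe_prop (e.symm i))
  intro hFrx
  have hsnoc : LinearIndependent ℓ (Fin.snoc B x : Fin (r+1) → (Fin n → ℓ)) := by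
    rw [linearIndependent_fin_snoc]
    exact ⟨hBind, by rw [hspanB]; exact hx⟩
  have h2 := Fr_indep hA hσ hsnoc
  have h3 : (fun i => Fr q A ((Fin.snoc B x : Fin (r+1) → (Fin n → ℓ)) i))
      = (Fin.snoc B (Fr q A x) : Fin (r+1) → (Fin n → ℓ)) := by
    funext i
    refine Fin.lastCases ?_ ?_ i
    · simp [Fin.snoc_last]
    · intro j
      simp [Fin.snoc_castSucc, hBFix j]
  rw [h3, linearIndependent_fin_snoc] at h2
  exact h2.2 (by rw [hspanB]; exact hFrx)

lemma lang_surj [IsSepClosed ℓ] (hq2 : 2 ≤ q) (hq0 : (q : ℓ) = 0)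
    (hqsum : ∀ x y : ℓ, (x + y) ^ q = x ^ q + y ^ q)
    {u'' : Fin n → ℓ} (hu : u'' ∈ Submodule.span ℓ {v : Fin n → ℓ | Fr q A v = v}) :
    ∃ u', u' ∈ Submodule.span ℓ {v : Fin n → ℓ | Fr q A v = v} ∧ u' - Fr q A u' = u'' := by
  obtain ⟨c, hsupp, hsum⟩ := Submodule.mem_span_set.mp hu
  choose sol hsol using fun z : ℓ => artin_schreier hq2 hq0 z
  refine ⟨∑ x ∈ c.support, sol (c x) • x, ?_, ?_⟩
  · refine Submodule.sum_mem _ fun x hxs => ?_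
    exact Submodule.smul_mem _ _ (Submodule.subset_span (hsupp hxs))
  · rw [Fr_sum hqsum]
    rw [← Finset.sum_sub_distrib]
    have : ∀ x ∈ c.support, sol (c x) • x - Fr q A (sol (c x) • x) = c x • x := by
      intro x hxs
      rw [Fr_smul]
      have hxfix : Fr q A x = x := hsupp hxs
      rw [hxfix, ← sub_smul, hsol (c x)]
    rw [Finset.sum_congr rfl this]
    rw [← hsum]
    rfl

lemma d_closed (hqsum : ∀ x y : ℓ, (x + y) ^ q = x ^ q + y ^ q) (t : ℓ) (a : ℕ → ℓ)
    (d : ℕ → ℓ) (hd0 : d 0 = a 0 * t ^ q) (hds : ∀ i, d (i + 1) = d i ^ q + a (i + 1) * t ^ q) :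
    ∀ i, d i = ∑ j ∈ Finset.range (i + 1), a (i - j) ^ q ^ j * t ^ q ^ (j + 1) := by
  have hsumpow : ∀ (s : Finset ℕ) (g : ℕ → ℓ), (∑ j ∈ s, g j) ^ q = ∑ j ∈ s, g j ^ q := by
    intro s g
    exact map_sum (AddMonoidHom.mk' (fun x : ℓ => x ^ q) hqsum) g s
  intro i
  induction i with
  | zero => simpa [pow_one] using hd0
  | succ i ih =>
    rw [hds i, ih, hsumpow]
    rw [Finset.sum_range_succ' (fun j => a (i + 1 - j) ^ q ^ j * t ^ q ^ (j + 1)) (i + 1)]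
    have h0 : a (i + 1 - 0) ^ q ^ 0 * t ^ q ^ (0 + 1) = a (i + 1) * t ^ q := by
      simp [pow_one]
    rw [h0]
    congr 1
    refine Finset.sum_congr rfl fun j hj => ?_
    rw [mul_pow, ← pow_mul, ← pow_mul]
    have h1 : i - j = i + 1 - (j + 1) := by omega
    rw [h1, ← pow_succ, ← pow_succ]


lemma span_fix_eq_top [IsSepClosed ℓ] {q : ℕ} {A : Matrix (Fin n) (Fin n) ℓ}
    (hq2 : 2 ≤ q) (hq0 : (q : ℓ) = 0)
    (hqsum : ∀ x y : ℓ, (x + y) ^ q = x ^ q + y ^ q)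
    (hσ : ∃ σ : ℓ →+* ℓ, ∀ x, σ x = x ^ q)
    (hA : IsUnit A) :
    Submodule.span ℓ {v : Fin n → ℓ | Fr q A v = v} = ⊤ := by
  classical
  set Fix : Set (Fin n → ℓ) := {v : Fin n → ℓ | Fr q A v = v} with hFixdef
  set W : Submodule ℓ (Fin n → ℓ) := Submodule.span ℓ Fix with hWdef
  by_contra hW
  obtain ⟨w, hw⟩ : ∃ w, w ∉ W := by
    by_contra h
    push_neg at h
    exact hW (Submodule.eq_top_iff'.mpr h)
  set g : ℕ → (Fin n → ℓ) := fun i => (Fr q A)^[i] w with hgdef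
  have hgsucc : ∀ i, g (i + 1) = Fr q A (g i) := fun i => Function.iterate_succ_apply' _ _ _
  have hg0 : g 0 = w := rfl
  have hmk0 : ∀ x : Fin n → ℓ, W.mkQ x = 0 ↔ x ∈ W := by
    intro x
    rw [Submodule.mkQ_apply, Submodule.Quotient.mk_eq_zero]
  have hP1 : LinearIndependent ℓ (fun i : Fin 1 => W.mkQ (g i)) := by
    refine linearIndependent_unique_iff.mpr ?_
    intro h0
    exact hw ((hmk0 w).mp (by simpa [hg0] using h0))
  have hPn : ¬ LinearIndependent ℓ (fun i : Fin (n + 1) => W.mkQ (g i)) := by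
    intro hPn1
    have hle := hPn1.fintype_card_le_finrank
    have h2 : Module.finrank ℓ ((Fin n → ℓ) ⧸ W) ≤ n := by
      have h3 := Submodule.finrank_quotient_le W
      have h4 : Module.finrank ℓ (Fin n → ℓ) = n := by
        simp [Module.finrank_pi]
      omega
    rw [Fintype.card_fin] at hle
    omega
  have hH : ∃ k, ¬ LinearIndependent ℓ (fun i : Fin k => W.mkQ (g i)) := ⟨n + 1, hPn⟩
  have hP0 : LinearIndependent ℓ (fun i : Fin 0 => W.mkQ (g i)) := linearIndependent_empty_type
  have hm'ne : Nat.find hH ≠ 0 ∧ Nat.find hH ≠ 1 :=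
    ⟨fun h => (Nat.find_spec hH) (by rw [h]; exact hP0),
     fun h => (Nat.find_spec hH) (by rw [h]; exact hP1)⟩
  obtain ⟨k, hk⟩ : ∃ k, Nat.find hH = k + 2 := ⟨Nat.find hH - 2, by omega⟩
  have hPk1 : LinearIndependent ℓ (fun i : Fin (k + 1) => W.mkQ (g i)) :=
    not_not.mp (Nat.find_min hH (by omega))
  have hPk2 : ¬ LinearIndependent ℓ (fun i : Fin (k + 2) => W.mkQ (g i)) := by
    rw [← hk]
    exact Nat.find_spec hH
  have hmem : W.mkQ (g (k + 1)) ∈ Submodule.span ℓ (Set.range fun i : Fin (k + 1) => W.mkQ (g i)) := by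
    by_contra hmem
    apply hPk2
    have hsnoceq : (fun i : Fin (k + 2) => W.mkQ (g i))
        = Fin.snoc (fun i : Fin (k + 1) => W.mkQ (g i)) (W.mkQ (g (k + 1))) := by
      funext i
      refine Fin.lastCases ?_ ?_ i
      · rw [Fin.snoc_last]
        simp
      · intro j
        rw [Fin.snoc_castSucc]
        simp
    rw [hsnoceq]
    exact linearIndependent_fin_snoc.mpr ⟨hPk1, hmem⟩
  have hmem' : W.mkQ (g (k + 1)) ∈ (Submodule.span ℓ (Set.range fun i : Fin (k + 1) => g i)).map W.mkQ := by
    rw [Submodule.map_span]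
    have himg : W.mkQ '' (Set.range fun i : Fin (k + 1) => g i)
        = Set.range fun i : Fin (k + 1) => W.mkQ (g i) := by
      rw [← Set.range_comp]
      rfl
    rw [himg]
    exact hmem
  obtain ⟨y, hy, hyeq⟩ := Submodule.mem_map.mp hmem'
  obtain ⟨a, ha⟩ := (Submodule.mem_span_range_iff_exists_fun ℓ).mp hy
  set u : Fin n → ℓ := g (k + 1) - y with hudef
  have huW : u ∈ W := by
    have h1 : (Submodule.Quotient.mk (p := W) y) = Submodule.Quotient.mk (g (k + 1)) := by
      rw [← Submodule.mkQ_apply, ← Submodule.mkQ_apply, hyeq]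
    have h2 := (Submodule.Quotient.eq W).mp h1
    have h3 := W.neg_mem h2
    rwa [neg_sub] at h3
  set aN : ℕ → ℓ := fun i => if h : i < k + 1 then a ⟨i, h⟩ else 0 with haN
  have haNlt : ∀ (i : ℕ) (h : i < k + 1), aN i = a ⟨i, h⟩ := by
    intro i h
    simp only [haN, dif_pos h]
  have hy' : ∑ i ∈ Finset.range (k + 1), aN i • g i = y := by
    rw [← ha, ← Fin.sum_univ_eq_sum_range (fun i => aN i • g i) (k + 1)]
    refine Finset.sum_congr rfl fun i _ => ?_
    rw [haNlt ↑i i.isLt]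
  have hane : ∃ j, j ≤ k ∧ aN j ≠ 0 := by
    by_contra hall
    push_neg at hall
    have hy0 : y = 0 := by
      rw [← hy']
      refine Finset.sum_eq_zero fun i hi => ?_
      rw [hall i (by have := Finset.mem_range.mp hi; omega), zero_smul]
    have hgk1 : g (k + 1) ∈ W := by
      have : g (k + 1) = u := by rw [hudef, hy0, sub_zero]
      rw [this]
      exact huW
    have hgknotW : g k ∉ W := by
      intro hkW
      have hne := hPk1.ne_zero ⟨k, by omega⟩
      exact hne ((hmk0 _).mpr hkW)
    exact (Fr_notin_span hA hσ hgknotW) (by rw [← hgsucc k]; exact hgk1)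
  obtain ⟨j1, hj1k, hj1⟩ := hane
  have hb : ∃ j, j ≤ k ∧ (fun j => aN (k - j) ^ q ^ j) j ≠ 0 := by
    refine ⟨k - j1, by omega, ?_⟩
    have : k - (k - j1) = j1 := by omega
    simp only [this]
    exact pow_ne_zero _ hj1
  obtain ⟨t, ht0, htsum⟩ := exists_t hq2 hq0 k (fun j => aN (k - j) ^ q ^ j) hb
  set d : ℕ → ℓ := fun i => Nat.rec (aN 0 * t ^ q) (fun i di => di ^ q + aN (i + 1) * t ^ q) i with hddef
  have hd0 : d 0 = aN 0 * t ^ q := rfl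
  have hds : ∀ i, d (i + 1) = d i ^ q + aN (i + 1) * t ^ q := fun i => rfl
  have hdk : d k = t := by
    rw [d_closed hqsum t aN d hd0 hds k]
    exact htsum.symm
  obtain ⟨u', hu'W, hu'⟩ := lang_surj (A := A) hq2 hq0 hqsum
    (Submodule.smul_mem _ (t ^ q) huW)
  set v : Fin n → ℓ := u' + ∑ i ∈ Finset.range (k + 1), d i • g i with hvdef
  have hy'' : g (k + 1) = u + ∑ i ∈ Finset.range (k + 1), aN i • g i := by
    rw [hy', hudef]
    abel
  have hFru' : Fr q A u' = u' - t ^ q • u := by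
    rw [← hu']
    abel
  have hclaim : (∑ i ∈ Finset.range k, d i ^ q • g (i + 1))
      + t ^ q • (∑ i ∈ Finset.range (k + 1), aN i • g i)
      = ∑ i ∈ Finset.range (k + 1), d i • g i := by
    have hs1 : ∑ i ∈ Finset.range k, d i ^ q • g (i + 1)
        = ∑ i ∈ Finset.range (k + 1), (if i = 0 then (0:ℓ) else d (i - 1) ^ q) • g i := by
      rw [Finset.sum_range_succ' (fun i => (if i = 0 then (0:ℓ) else d (i - 1) ^ q) • g i) k]
      simp
    have hs2 : t ^ q • (∑ i ∈ Finset.range (k + 1), aN i • g i)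
        = ∑ i ∈ Finset.range (k + 1), (t ^ q * aN i) • g i := by
      rw [Finset.smul_sum]
      refine Finset.sum_congr rfl fun i _ => ?_
      rw [smul_smul]
    rw [hs1, hs2, ← Finset.sum_add_distrib]
    refine Finset.sum_congr rfl fun i _ => ?_
    rw [← add_smul]
    congr 1
    cases i with
    | zero => rw [if_pos rfl, hd0, zero_add, mul_comm]
    | succ j =>
      rw [if_neg (Nat.succ_ne_zero j), hds j]
      simp only [Nat.add_sub_cancel]
      rw [mul_comm (t ^ q) (aN (j + 1))]
  have hFrv : Fr q A v = v := by
    rw [hvdef, Fr_add hqsum, Fr_sum hqsum]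
    have hterm : ∀ i ∈ Finset.range (k + 1), Fr q A (d i • g i) = d i ^ q • g (i + 1) := by
      intro i _
      rw [Fr_smul, hgsucc i]
    rw [Finset.sum_congr rfl hterm, Finset.sum_range_succ, hdk, hy'', hFru']
    rw [smul_add]
    have := hclaim
    rw [← this]
    abel
  have hvW : v ∈ W := Submodule.subset_span hFrv
  have hmkv : W.mkQ v = ∑ i ∈ Finset.range (k + 1), d i • W.mkQ (g i) := by
    rw [hvdef, map_add, map_sum]
    have h1 : W.mkQ u' = 0 := (hmk0 u').mpr hu'W
    rw [h1, zero_add]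
    exact Finset.sum_congr rfl fun i _ => _root_.map_smul W.mkQ (d i) (g i)
  have hmkv0 : W.mkQ v = 0 := (hmk0 v).mpr hvW
  rw [hmkv0] at hmkv
  have hfin : ∑ i : Fin (k + 1), d ↑i • W.mkQ (g ↑i) = 0 := by
    rw [Fin.sum_univ_eq_sum_range (fun i => d i • W.mkQ (g i)) (k + 1)]
    exact hmkv.symm
  have hall0 := Fintype.linearIndependent_iff.mp hPk1 (fun i : Fin (k + 1) => d ↑i) hfin
  have hdk0 : d k = 0 := hall0 ⟨k, by omega⟩
  rw [hdk] at hdk0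
  exact ht0 hdk0

end LangGLAux

open LangGLAux in
/-- Lang's theorem for `GL_n`: over a separably closed field `ℓ` of characteristic
`p > 0`, with `q` a power of `p` and `τ` the `q`-power Frobenius, every invertible
matrix `A` can be written so that `U⁻¹ * A * U^τ = 1` for some invertible `U`. -/
theorem stmt_0 (p : ℕ) [Fact p.Prime] (ℓ : Type*) [Field ℓ] [IsSepClosed ℓ]
    [CharP ℓ p] (f : ℕ) (hf : 0 < f) (q : ℕ) (hq : q = p ^ f)
    (n : ℕ) (A : Matrix (Fin n) (Fin n) ℓ) (hA : IsUnit A) :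
    ∃ U : Matrix (Fin n) (Fin n) ℓ,
      IsUnit U ∧ U⁻¹ * A * U.map (fun x => x ^ q) = 1 := by
  classical
  subst hq
  have hp2 : 2 ≤ p := (Fact.out : p.Prime).two_le
  have hq2 : 2 ≤ p ^ f := le_trans hp2 (Nat.le_self_pow (by omega) p)
  have hq0 : ((p ^ f : ℕ) : ℓ) = 0 := by
    rw [Nat.cast_pow, CharP.cast_eq_zero ℓ p, zero_pow (by omega)]
  have hqsum : ∀ x y : ℓ, (x + y) ^ p ^ f = x ^ p ^ f + y ^ p ^ f := fun x y =>
    add_pow_char_pow x y p f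
  have hσ : ∃ σ : ℓ →+* ℓ, ∀ x, σ x = x ^ p ^ f :=
    ⟨iterateFrobenius ℓ p f, fun x => iterateFrobenius_def p f x⟩
  have hspan := span_fix_eq_top (A := A) hq2 hq0 hqsum hσ hA
  obtain ⟨b, hbFix, hbspan, hbind⟩ :=
    exists_linearIndependent ℓ {v : Fin n → ℓ | Fr (p ^ f) A v = v}
  rw [hspan] at hbspan
  have hbfin : b.Finite := hbind.setFinite
  have : Fintype b := hbfin.fintype
  have hspanb : ⊤ ≤ Submodule.span ℓ (Set.range ((↑) : b → (Fin n → ℓ))) := by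
    rw [Subtype.range_coe, hbspan]
  let B : Module.Basis b ℓ (Fin n → ℓ) := Module.Basis.mk hbind hspanb
  have hcard : Fintype.card b = n := by
    have h1 : n = Fintype.card b := by
      simpa [Module.finrank_pi] using Module.finrank_eq_card_basis B
    omega
  let e : b ≃ Fin n := Fintype.equivFinOfCardEq hcard
  set u : Fin n → (Fin n → ℓ) := fun i => ((e.symm i : b) : Fin n → ℓ) with hu
  have hufix : ∀ i, Fr (p ^ f) A (u i) = u i := fun i => hbFix (e.symm i).2
  have hrangeu : Set.range u = b := by
    rw [hu]
    have h1 : Set.range (fun i => ((e.symm i : b) : Fin n → ℓ))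
        = Subtype.val '' Set.range e.symm := by
      rw [← Set.range_comp]
      rfl
    rw [h1, Equiv.range_eq_univ, Set.image_univ, Subtype.range_coe]
  have hspanu : Submodule.span ℓ (Set.range u) = ⊤ := by rw [hrangeu, hbspan]
  set U : Matrix (Fin n) (Fin n) ℓ := Matrix.of (fun i j => u j i) with hU
  have hUsurj : Function.Surjective U.mulVec := by
    intro y
    have hy : y ∈ Submodule.span ℓ (Set.range u) := by rw [hspanu]; trivial
    obtain ⟨c, hc⟩ := (Submodule.mem_span_range_iff_exists_fun ℓ).mp hy
    refine ⟨c, ?_⟩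
    funext i
    rw [← hc]
    simp only [Matrix.mulVec, dotProduct, hU, Matrix.of_apply, Finset.sum_apply,
      Pi.smul_apply, smul_eq_mul]
    exact Finset.sum_congr rfl fun j _ => mul_comm _ _
  have hUunit : IsUnit U := Matrix.mulVec_surjective_iff_isUnit.mp hUsurj
  have hAU : A * U.map (fun x => x ^ p ^ f) = U := by
    ext i j
    have h1 : (A * U.map fun x => x ^ p ^ f) i j = Fr (p ^ f) A (u j) i := by
      rw [Matrix.mul_apply]
      simp only [Fr, Matrix.mulVec, dotProduct, Matrix.map_apply, hU, Matrix.of_apply]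
    rw [h1, hufix j]
    rfl
  refine ⟨U, hUunit, ?_⟩
  rw [mul_assoc, hAU, Matrix.nonsing_inv_mul U ((Matrix.isUnit_iff_isUnit_det U).mp hUunit)]
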